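/- Let C be a rank-nondegenerate [n,k]_{q^m/q} code with n ≥ (k-1)m + 1. Then C is minimal. -/

import Mathlib

open Module Submodule

/-- The rank support of a vector `v ∈ L^n` over the subfield `K`: the `K`-span of the
rows of the expansion matrix, i.e. the space of all `(φ (v 1), ..., φ (v n))` for
`K`-linear functionals `φ : L → K`. -/
noncomputable def rkSupport (K : Type) {L : Type} [Field K] [Field L] [Algebra K L]
    {n : ℕ} (v : Fin n → L) : Submodule K (Fin n → K) :=
  LinearMap.range (LinearMap.pi (fun i => LinearMap.applyₗ (v i) :
    Fin n → Module.Dual K L →ₗ[K] K))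

section aux
variable {K L : Type} [Field K] [Field L] [Algebra K L] {n : ℕ}

lemma mem_rkSupport_iff {v : Fin n → L} {x : Fin n → K} :
    x ∈ rkSupport K v ↔ ∃ φ : Module.Dual K L, (fun i => φ (v i)) = x := Iff.rfl

lemma rkSupport_smul_le (a : L) (v : Fin n → L) :
    rkSupport K (a • v) ≤ rkSupport K v := by
  intro x hx
  obtain ⟨φ, rfl⟩ := mem_rkSupport_iff.mp hx
  exact mem_rkSupport_iff.mpr ⟨φ ∘ₗ LinearMap.mulLeft K a, by
    funext i; simp [LinearMap.mulLeft_apply, Pi.smul_apply, smul_eq_mul]⟩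

lemma rkSupport_add_le (v w : Fin n → L) :
    rkSupport K (v + w) ≤ rkSupport K v ⊔ rkSupport K w := by
  intro x hx
  obtain ⟨φ, rfl⟩ := mem_rkSupport_iff.mp hx
  have : (fun i => φ ((v + w) i)) = (fun i => φ (v i)) + (fun i => φ (w i)) := by
    funext i; simp
  rw [this]
  exact Submodule.add_mem_sup (mem_rkSupport_iff.mpr ⟨φ, rfl⟩)
    (mem_rkSupport_iff.mpr ⟨φ, rfl⟩)

lemma rkSupport_zero : rkSupport K (0 : Fin n → L) = ⊥ := by
  refine le_antisymm ?_ bot_le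
  intro x hx
  obtain ⟨φ, rfl⟩ := mem_rkSupport_iff.mp hx
  simp [Submodule.mem_bot]
  funext i; simp

lemma rkSupport_le_of_mem_span {s : Set (Fin n → L)} {u : Fin n → L}
    (hu : u ∈ span L s) :
    rkSupport K u ≤ ⨆ w ∈ s, rkSupport K w := by
  induction hu using Submodule.span_induction with
  | mem w hw => exact le_iSup₂ (f := fun w _ => rkSupport K w) w hw
  | zero => rw [rkSupport_zero]; exact bot_le
  | add x y _ _ hx hy => exact (rkSupport_add_le x y).trans (sup_le hx hy)
  | smul a x _ hx => exact (rkSupport_smul_le a x).trans hx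

lemma eq_zero_of_rkSupport_le_bot [FiniteDimensional K L] {v : Fin n → L}
    (h : rkSupport K v ≤ ⊥) : v = 0 := by
  funext i
  show v i = (0 : L)
  rw [← Module.forall_dual_apply_eq_zero_iff K (v i)]
  intro φ
  have hm : (fun j => φ (v j)) ∈ rkSupport K v := mem_rkSupport_iff.mpr ⟨φ, rfl⟩
  have := (Submodule.mem_bot (R := K)).mp (h hm)
  exact congrFun this i

lemma finrank_rkSupport_le [FiniteDimensional K L] (v : Fin n → L) :
    finrank K (rkSupport K v) ≤ finrank K L :=
  (LinearMap.finrank_range_le _).trans_eq Subspace.dual_finrank_eq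

lemma finrank_biSup_le {ι : Type*} (s : Finset ι) {V : Type*} [AddCommGroup V]
    [Module K V] [FiniteDimensional K V] (M : ι → Submodule K V) :
    finrank K (⨆ i ∈ s, M i : Submodule K V) ≤ ∑ i ∈ s, finrank K (M i) := by
  classical
  induction s using Finset.induction with
  | empty => simp
  | insert _ _ h ih =>
    rename_i a s
    rw [Finset.iSup_insert, Finset.sum_insert h]
    exact (Submodule.finrank_add_le_finrank_add_finrank _ _).trans
      (add_le_add le_rfl ih)

end aux

theorem stmt_18 {K L : Type} [Field K] [Field L] [Algebra K L] [Fintype K] [Fintype L]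
    {n k m : ℕ} (hm : Module.finrank K L = m)
    (C : Submodule L (Fin n → L)) (hk : Module.finrank L C = k)
    (hnd : (⨆ v ∈ C, rkSupport K v) = ⊤)
    (hn : (k - 1) * m + 1 ≤ n) :
    ∀ v ∈ C, ∀ v' ∈ C, rkSupport K v' ≤ rkSupport K v → ∃ α : L, v' = α • v := by
  have hFD : FiniteDimensional K L := Module.Finite.of_finite
  have hFDC : FiniteDimensional L C := Module.Finite.of_finite
  intro v hv v' hv' hle
  by_cases hv0 : v = 0
  · subst hv0
    rw [rkSupport_zero] at hle
    exact ⟨0, by rw [eq_zero_of_rkSupport_le_bot hle, zero_smul]⟩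
  by_contra hno
  push_neg at hno
  have hli : LinearIndependent L ![v, v'] :=
    (LinearIndependent.pair_iff' hv0).mpr fun a ha => hno a ha.symm
  set u : C := ⟨v, hv⟩ with hu
  set u' : C := ⟨v', hv'⟩ with hu'
  have hcomp : (⇑C.subtype ∘ ![u, u']) = ![v, v'] := by
    funext i; fin_cases i <;> rfl
  have hliC : LinearIndependent L ![u, u'] :=
    LinearIndependent.of_comp C.subtype (by rwa [hcomp])
  set W : Submodule L C := span L (Set.range ![u, u']) with hW
  have hWrank : finrank L W = 2 := by
    rw [finrank_span_eq_card hliC]; simp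
  obtain ⟨T, hT⟩ := Submodule.exists_isCompl W
  have hsum := Submodule.finrank_add_eq_of_isCompl hT
  rw [hk, hWrank] at hsum
  obtain ⟨j, rfl⟩ : ∃ j, k = j + 2 := ⟨k - 2, by omega⟩
  have hTd : finrank L T = j := by omega
  haveI : Module.Free L T := Module.Free.of_divisionRing L T
  let b : Basis (Fin j) L T := Module.finBasisOfFinrankEq L T hTd
  set g : Fin j → (Fin n → L) := fun i => ((b i : C) : Fin n → L) with hg
  set S : Submodule K (Fin n → K) :=
    rkSupport K v ⊔ ⨆ i, rkSupport K (g i) with hS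
  have key : ∀ x ∈ C, rkSupport K x ≤ S := by
    intro x hx
    have hxWT : (⟨x, hx⟩ : C) ∈ W ⊔ T := by rw [hT.sup_eq_top]; trivial
    obtain ⟨w, hwW, t, htT, hwt⟩ := Submodule.mem_sup.mp hxWT
    have hx' : x = (w : Fin n → L) + (t : Fin n → L) :=
      (congrArg Subtype.val hwt).symm
    rw [hx']
    refine (rkSupport_add_le _ _).trans (sup_le ?_ ?_)
    · -- w part
      have hwmem : (w : Fin n → L) ∈ span L ({v, v'} : Set (Fin n → L)) := by
        have h1 : (w : Fin n → L) ∈ Submodule.map C.subtype W :=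
          Submodule.mem_map_of_mem hwW
        rw [hW, Submodule.map_span] at h1
        have himg : ⇑C.subtype '' Set.range ![u, u'] = ({v, v'} : Set (Fin n → L)) := by
          rw [← Set.range_comp, hcomp]
          simp [Matrix.range_cons, Matrix.range_empty]
          exact Set.pair_comm v' v
        rwa [himg] at h1
      obtain ⟨a, c, hac⟩ := Submodule.mem_span_pair.mp hwmem
      rw [← hac]
      refine (rkSupport_add_le _ _).trans (sup_le ?_ ?_)
      · exact (rkSupport_smul_le a v).trans le_sup_left
      · exact (rkSupport_smul_le c v').trans (hle.trans le_sup_left)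
    · -- t part
      have htmem : (t : Fin n → L) ∈ span L (Set.range g) := by
        have ht' : (⟨t, htT⟩ : T) ∈ span L (Set.range ⇑b) := by
          rw [b.span_eq]; trivial
        have h1 : ((C.subtype ∘ₗ T.subtype) ⟨t, htT⟩) ∈
            Submodule.map (C.subtype ∘ₗ T.subtype) (span L (Set.range ⇑b)) :=
          Submodule.mem_map_of_mem ht'
        rw [Submodule.map_span, ← Set.range_comp] at h1
        have hgc : (⇑(C.subtype ∘ₗ T.subtype) ∘ ⇑b) = g := by
          funext i; rfl
        rwa [hgc] at h1
      refine (rkSupport_le_of_mem_span htmem).trans ?_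
      rw [iSup_range]
      exact le_sup_right
  have htop : S = ⊤ := by
    refine top_unique ?_
    rw [← hnd]
    exact iSup₂_le key
  have h1 : finrank K S = n := by
    rw [htop, finrank_top]
    simp
  have h2 : finrank K S ≤ m + j * m := by
    rw [hS]
    refine (Submodule.finrank_add_le_finrank_add_finrank _ _).trans ?_
    refine add_le_add ((finrank_rkSupport_le v).trans_eq hm) ?_
    have huniv : (⨆ i, rkSupport K (g i)) =
        ⨆ i ∈ (Finset.univ : Finset (Fin j)), rkSupport K (g i) := by simp
    rw [huniv]
    refine (finrank_biSup_le _ _).trans ?_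
    calc ∑ i ∈ Finset.univ, finrank K (rkSupport K (g i))
        ≤ ∑ _i ∈ (Finset.univ : Finset (Fin j)), m :=
          Finset.sum_le_sum fun i _ => (finrank_rkSupport_le (g i)).trans_eq hm
      _ = j * m := by simp [Finset.sum_const, mul_comm]
  have harith : (j + 2 - 1) * m = m + j * m := by
    have h3 : j + 2 - 1 = j + 1 := by omega
    rw [h3]; ring
  omega
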